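/- Let H be a complex Hilbert space and (φ̃ₙ), (Ψ̃ₙ) two sequences in H. Let (αₙ) be real numbers with 0 = α₀ < α₁ < α₂ < …, and set ᾱ = supₙ αₙ ∈ (0, ∞]. Assume there exist strictly positive constants A_φ, A_Ψ, r_φ, r_Ψ and strictly positive sequences Mₙ(φ), Mₙ(Ψ) such that Mₙ(φ)/M_{n+1}(φ) → M(φ) and Mₙ(Ψ)/M_{n+1}(Ψ) → M(Ψ) (limits in (0, ∞]), and ‖φ̃ₙ‖ ≤ A_φ r_φⁿ Mₙ(φ), ‖Ψ̃ₙ‖ ≤ A_Ψ r_Ψⁿ Mₙ(Ψ) for all n ≥ 0. Set ρ = ᾱ · min(1, M(φ)/r_φ, M(Ψ)/r_Ψ) (with the convention ∞/r = ∞ and min with ∞ ignored). Then for every z ∈ ℂ with |z| < ρ, the series Σ_{k≥0} |z|^{2k}/(α_k!)² converges, and the series Σ_{k≥0} (z^k/α_k!) φ̃_k and Σ_{k≥0} (z^k/α_k!) Ψ̃_k converge in H, where α₀! = 1 and α_k! = α₁α₂⋯α_k. -/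

import Mathlib

open Filter
open scoped ENNReal

/-- The generalized factorial `α_k! = α₁ α₂ ⋯ α_k`, with `α₀! = 1`. -/
noncomputable def afact (α : ℕ → ℝ) : ℕ → ℝ
  | 0 => 1
  | n + 1 => afact α n * α (n + 1)

/-- Ratio test helper: if `b (n+1) * d n = c * b n` with `b ≥ 0`, `c ≥ 0`, and
`ofReal (d n)` tends to `L` with `ofReal c < L`, then `b` is summable. -/
lemma aux_summable (b : ℕ → ℝ) (hb : ∀ n, 0 ≤ b n) (c : ℝ) (hc : 0 ≤ c)
    (d : ℕ → ℝ) (L : ℝ≥0∞) (hrel : ∀ n, b (n + 1) * d n = c * b n)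
    (hcd : Tendsto (fun n => ENNReal.ofReal (d n)) atTop (nhds L))
    (hlt : ENNReal.ofReal c < L) : Summable b := by
  obtain ⟨c', hc1, hc2⟩ := exists_between hlt
  have hc'top : c' ≠ ⊤ := hc2.ne_top
  have hc'0 : c' ≠ 0 := (lt_of_le_of_lt zero_le hc1).ne'
  have hc'pos : 0 < c'.toReal := ENNReal.toReal_pos hc'0 hc'top
  have hr1 : c / c'.toReal < 1 := by
    rw [div_lt_one hc'pos]
    exact (ENNReal.ofReal_lt_iff_lt_toReal hc hc'top).mp hc1
  apply summable_of_ratio_norm_eventually_le hr1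
  filter_upwards [hcd.eventually_const_lt hc2] with n hn
  have hdn : c'.toReal < d n := by
    rwa [ENNReal.lt_ofReal_iff_toReal_lt hc'top] at hn
  rw [Real.norm_of_nonneg (hb _), Real.norm_of_nonneg (hb _)]
  have hkey : b (n + 1) * c'.toReal ≤ c * b n := by
    calc b (n + 1) * c'.toReal ≤ b (n + 1) * d n :=
          mul_le_mul_of_nonneg_left hdn.le (hb _)
      _ = c * b n := hrel n
  rw [div_mul_eq_mul_div, le_div_iff₀ hc'pos]
  linarith

/-- Helper: positivity of the generalized factorial. -/
lemma afact_pos (α : ℕ → ℝ) (hαpos : ∀ n, 0 < α (n + 1)) : ∀ n, 0 < afact α n := by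
  intro n
  induction n with
  | zero => norm_num [afact]
  | succ k ih => exact mul_pos ih (hαpos k)

/-- Helper for the vector-valued series. -/
lemma aux_vec {H : Type*} [NormedAddCommGroup H] [NormedSpace ℂ H] [CompleteSpace H]
    (φt : ℕ → H) (α : ℕ → ℝ) (hαpos : ∀ n, 0 < α (n + 1))
    (A r : ℝ) (hA : 0 < A) (hr : 0 < r)
    (M : ℕ → ℝ) (hMpos : ∀ n, 0 < M n) (Mlim : ℝ≥0∞) (hMne : Mlim ≠ 0)
    (hMlim : Tendsto (fun n => ENNReal.ofReal (M n / M (n + 1))) atTop (nhds Mlim))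
    (hbd : ∀ n, ‖φt n‖ ≤ A * r ^ n * M n)
    (abar : ℝ≥0∞) (habar0 : abar ≠ 0)
    (hαtend' : Tendsto (fun n => ENNReal.ofReal (α (n + 1))) atTop (nhds abar))
    (z : ℂ) (hz : ENNReal.ofReal ‖z‖ < abar * Mlim / ENNReal.ofReal r) :
    Summable (fun k : ℕ => (z ^ k / (afact α k : ℂ)) • φt k) := by
  have hfact := afact_pos α hαpos
  set b : ℕ → ℝ := fun k => A * (‖z‖ * r) ^ k * M k / afact α k with hbdef
  have hbnn : ∀ k, 0 ≤ b k := fun k =>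
    div_nonneg (mul_nonneg (mul_nonneg hA.le (pow_nonneg (mul_nonneg (norm_nonneg _) hr.le) _))
      (hMpos k).le) (hfact k).le
  have hsum : Summable b := by
    apply aux_summable b hbnn (‖z‖ * r) (mul_nonneg (norm_nonneg _) hr.le)
      (fun n => α (n + 1) * (M n / M (n + 1))) (abar * Mlim)
    · intro n
      have h1 := (hfact n).ne'
      have h2 := (hαpos n).ne'
      have h3 := (hMpos n).ne'
      have h4 := (hMpos (n + 1)).ne'
      simp only [hbdef, afact]
      field_simp
      ring
    · have : (fun n => ENNReal.ofReal (α (n + 1) * (M n / M (n + 1)))) =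
          fun n => ENNReal.ofReal (α (n + 1)) * ENNReal.ofReal (M n / M (n + 1)) := by
        funext n
        rw [ENNReal.ofReal_mul (hαpos n).le]
      rw [this]
      exact ENNReal.Tendsto.mul hαtend' (Or.inl habar0) hMlim (Or.inl hMne)
    · rw [ENNReal.ofReal_mul (norm_nonneg _)]
      rwa [ENNReal.lt_div_iff_mul_lt (Or.inl (by simp [hr, hr.ne'] : ENNReal.ofReal r ≠ 0))
        (Or.inl ENNReal.ofReal_ne_top)] at hz
  apply Summable.of_norm_bounded hsum
  intro k
  have hfk := hfact k
  rw [norm_smul, norm_div, norm_pow, Complex.norm_real, Real.norm_of_nonneg hfk.le]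
  calc ‖z‖ ^ k / afact α k * ‖φt k‖ ≤ ‖z‖ ^ k / afact α k * (A * r ^ k * M k) := by
        apply mul_le_mul_of_nonneg_left (hbd k)
        positivity
    _ = b k := by
        simp only [hbdef, mul_pow]
        ring

/-- convergence of the bi-coherent state series inside the disc of
radius `ρ = ᾱ · min(1, M(φ)/r_φ, M(Ψ)/r_Ψ)`. -/
theorem stmt2 (H : Type*) [NormedAddCommGroup H] [InnerProductSpace ℂ H]
    [CompleteSpace H]
    (φt Ψt : ℕ → H) (α : ℕ → ℝ)
    (hα0 : α 0 = 0) (hαmono : StrictMono α)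
    (Aφ AΨ rφ rΨ : ℝ) (hAφ : 0 < Aφ) (hAΨ : 0 < AΨ) (hrφ : 0 < rφ) (hrΨ : 0 < rΨ)
    (Mφ MΨ : ℕ → ℝ) (hMφpos : ∀ n, 0 < Mφ n) (hMΨpos : ∀ n, 0 < MΨ n)
    (Mφlim MΨlim : ℝ≥0∞) (hMφne : Mφlim ≠ 0) (hMΨne : MΨlim ≠ 0)
    (hMφlim : Tendsto (fun n => ENNReal.ofReal (Mφ n / Mφ (n + 1))) atTop (nhds Mφlim))
    (hMΨlim : Tendsto (fun n => ENNReal.ofReal (MΨ n / MΨ (n + 1))) atTop (nhds MΨlim))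
    (hφbd : ∀ n : ℕ, ‖φt n‖ ≤ Aφ * rφ ^ n * Mφ n)
    (hΨbd : ∀ n : ℕ, ‖Ψt n‖ ≤ AΨ * rΨ ^ n * MΨ n)
    (ρ : ℝ≥0∞)
    (hρ : ρ = (⨆ n, ENNReal.ofReal (α n)) *
      min 1 (min (Mφlim / ENNReal.ofReal rφ) (MΨlim / ENNReal.ofReal rΨ))) :
    ∀ z : ℂ, ENNReal.ofReal ‖z‖ < ρ →
      Summable (fun k : ℕ => ‖z‖ ^ (2 * k) / (afact α k) ^ 2) ∧
      Summable (fun k : ℕ => (z ^ k / (afact α k : ℂ)) • φt k) ∧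
      Summable (fun k : ℕ => (z ^ k / (afact α k : ℂ)) • Ψt k) := by
  intro z hz
  have hαpos : ∀ n, 0 < α (n + 1) := fun n => hα0 ▸ hαmono (Nat.succ_pos n)
  have hfact := afact_pos α hαpos
  set abar : ℝ≥0∞ := ⨆ n, ENNReal.ofReal (α n) with habar
  have hαtend : Tendsto (fun n => ENNReal.ofReal (α n)) atTop (nhds abar) :=
    tendsto_atTop_iSup (fun m n h => ENNReal.ofReal_le_ofReal (hαmono.monotone h))
  have hαtend' : Tendsto (fun n => ENNReal.ofReal (α (n + 1))) atTop (nhds abar) :=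
    hαtend.comp (tendsto_add_atTop_nat 1)
  have habar0 : abar ≠ 0 := by
    have h1 : (0 : ℝ≥0∞) < ENNReal.ofReal (α 1) := ENNReal.ofReal_pos.mpr (hαpos 0)
    exact (lt_of_lt_of_le h1 (le_iSup (fun n => ENNReal.ofReal (α n)) 1)).ne'
  have hzαbar : ENNReal.ofReal ‖z‖ < abar := by
    refine lt_of_lt_of_le hz ?_
    rw [hρ]
    calc abar * min 1 (min (Mφlim / ENNReal.ofReal rφ) (MΨlim / ENNReal.ofReal rΨ))
        ≤ abar * 1 := mul_le_mul_right (min_le_left _ _) _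
      _ = abar := mul_one _
  have hzφ : ENNReal.ofReal ‖z‖ < abar * Mφlim / ENNReal.ofReal rφ := by
    refine lt_of_lt_of_le hz ?_
    rw [hρ, mul_div_assoc]
    exact mul_le_mul_right (le_trans (min_le_right _ _) (min_le_left _ _)) _
  have hzΨ : ENNReal.ofReal ‖z‖ < abar * MΨlim / ENNReal.ofReal rΨ := by
    refine lt_of_lt_of_le hz ?_
    rw [hρ, mul_div_assoc]
    exact mul_le_mul_right (le_trans (min_le_right _ _) (min_le_right _ _)) _
  refine ⟨?_, ?_, ?_⟩
  · -- the scalar series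
    apply aux_summable (fun k => ‖z‖ ^ (2 * k) / afact α k ^ 2)
      (fun k => div_nonneg (pow_nonneg (norm_nonneg _) _) (sq_nonneg _))
      (‖z‖ ^ 2) (sq_nonneg _) (fun n => α (n + 1) ^ 2) (abar * abar)
    · intro n
      have h1 := (hfact n).ne'
      have h2 := (hαpos n).ne'
      simp only [afact]
      field_simp
      ring
    · have : (fun n => ENNReal.ofReal (α (n + 1) ^ 2)) =
          fun n => ENNReal.ofReal (α (n + 1)) * ENNReal.ofReal (α (n + 1)) := by
        funext n
        rw [sq, ENNReal.ofReal_mul (hαpos n).le]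
      rw [this]
      exact ENNReal.Tendsto.mul hαtend' (Or.inl habar0) hαtend' (Or.inl habar0)
    · calc ENNReal.ofReal (‖z‖ ^ 2) = ENNReal.ofReal ‖z‖ ^ 2 := by
            rw [ENNReal.ofReal_pow (norm_nonneg _)]
        _ < abar ^ 2 := (ENNReal.pow_lt_pow_left_iff two_ne_zero).mpr hzαbar
        _ = abar * abar := sq abar
  · exact aux_vec φt α hαpos Aφ rφ hAφ hrφ Mφ hMφpos Mφlim hMφne hMφlim hφbd
      abar habar0 hαtend' z hzφ
  · exact aux_vec Ψt α hαpos AΨ rΨ hAΨ hrΨ MΨ hMΨpos MΨlim hMΨne hMΨlim hΨbd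
      abar habar0 hαtend' z hzΨ
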